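/- Let Ω be any family of pairs of supports (S_L, S_R) with S_L an m×r binary matrix and S_R an n×r binary matrix, and let Σ_Ω be the union over (S_L,S_R) ∈ Ω of the sets {(X,Y) : supp(X) ⊆ S_L, supp(Y) ⊆ S_R}. If (X,Y) ∈ Σ_Ω is a PS-unique factorization of XYᵀ in Σ_Ω, then colsupp(X) = colsupp(Y). -/

import Mathlib

open Matrix

def IsGenPerm {r : ℕ} (G : Matrix (Fin r) (Fin r) ℂ) : Prop :=
  ∃ (σ : Equiv.Perm (Fin r)) (d : Fin r → ℂ),
    (∀ i, d i ≠ 0) ∧ ∀ i j, G i j = if i = σ j then d i else 0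

def PSEquiv {m n r : ℕ}
    (p q : Matrix (Fin m) (Fin r) ℂ × Matrix (Fin n) (Fin r) ℂ) : Prop :=
  ∃ G, IsGenPerm G ∧ q.1 = p.1 * G ∧ q.2 = p.2 * (G⁻¹)ᵀ

def PSUniqueSet {m n r : ℕ}
    (Sig : Set (Matrix (Fin m) (Fin r) ℂ × Matrix (Fin n) (Fin r) ℂ)) :
    Set (Matrix (Fin m) (Fin r) ℂ × Matrix (Fin n) (Fin r) ℂ) :=
  {p | p ∈ Sig ∧ ∀ q ∈ Sig, q.1 * q.2ᵀ = p.1 * p.2ᵀ → PSEquiv p q}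

/-- The support of a matrix is contained in the (binary) support `S`. -/
def SuppSub {a b : ℕ} (X : Matrix (Fin a) (Fin b) ℂ) (S : Set (Fin a × Fin b)) : Prop :=
  ∀ i j, X i j ≠ 0 → (i, j) ∈ S

/-- The column support of a matrix: indices of its nonzero columns. -/
def Colsupp {a b : ℕ} (X : Matrix (Fin a) (Fin b) ℂ) : Set (Fin b) :=
  {j | ∃ i, X i j ≠ 0}

/-- The column support of a support (set of index pairs). -/
def ColsuppS {a b : ℕ} (S : Set (Fin a × Fin b)) : Set (Fin b) :=
  {j | ∃ i, (i, j) ∈ S}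

/-- The constraint set Σ_Ω associated with a family of pairs of supports. -/
def SigmaOm {m n r : ℕ} (Om : Set (Set (Fin m × Fin r) × Set (Fin n × Fin r))) :
    Set (Matrix (Fin m) (Fin r) ℂ × Matrix (Fin n) (Fin r) ℂ) :=
  {p | ∃ S ∈ Om, SuppSub p.1 S.1 ∧ SuppSub p.2 S.2}


-- key counting lemma
lemma key_lemma {a r : ℕ} (W : Matrix (Fin a) (Fin r) ℂ) (σ : Equiv.Perm (Fin r))
    (c : Fin r → ℂ) (hc : ∀ k, c k ≠ 0) (j : Fin r) (hj : ∃ i, W i j ≠ 0)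
    (W' : Matrix (Fin a) (Fin r) ℂ)
    (hW' : ∀ i k, W' i k = if k = j then 0 else W i k)
    (hrel : ∀ i k, W' i k = c k * W i (σ k)) : False := by
  classical
  set Z : Finset (Fin r) := Finset.univ.filter (fun k => ∀ i, W i k = 0) with hZ
  have hmem : ∀ k : Fin r, k ∈ insert j Z ↔ σ k ∈ Z := by
    intro k
    simp only [hZ, Finset.mem_insert, Finset.mem_filter, Finset.mem_univ, true_and]
    constructor
    · rintro (rfl | hk) <;> intro i
      · have := hrel i k
        rw [hW'] at this
        simp at this
        exact this.resolve_left (hc k)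
      · have := hrel i k
        rw [hW'] at this
        by_cases hkj : k = j
        · subst hkj; simp at this
          exact this.resolve_left (hc k)
        · rw [if_neg hkj, hk i, eq_comm, mul_eq_zero] at this
          rcases this with h1 | h1
          · exact absurd h1 (hc k)
          · exact h1
    · intro hk
      by_cases hkj : k = j
      · exact Or.inl hkj
      · refine Or.inr fun i => ?_
        have := hrel i k
        rw [hW', if_neg hkj, hk i, mul_zero] at this
        exact this
  have hjZ : j ∉ Z := by
    simp only [hZ, Finset.mem_filter, Finset.mem_univ, true_and]
    push_neg
    exact hj
  have himg : Finset.image σ (insert j Z) = Z := by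
    ext z
    simp only [Finset.mem_image]
    constructor
    · rintro ⟨k, hk, rfl⟩; exact (hmem k).mp hk
    · intro hz; exact ⟨σ.symm z, (hmem _).mpr (by simpa using hz), by simp⟩
  have hcard := Finset.card_image_of_injective (insert j Z) σ.injective
  rw [himg, Finset.card_insert_of_notMem hjZ] at hcard
  omega

-- inverse of a generalized permutation matrix
lemma genperm_inv {r : ℕ} (G : Matrix (Fin r) (Fin r) ℂ) (σ : Equiv.Perm (Fin r))
    (d : Fin r → ℂ) (hd : ∀ i, d i ≠ 0)
    (hG : ∀ i j, G i j = if i = σ j then d i else 0) :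
    G⁻¹ = Matrix.of (fun i k => if σ i = k then (d (σ i))⁻¹ else 0) := by
  apply Matrix.inv_eq_right_inv
  ext i k
  simp only [Matrix.mul_apply, hG, Matrix.of_apply, Matrix.one_apply]
  rw [Finset.sum_eq_single (σ.symm i)]
  · simp only [Equiv.apply_symm_apply, if_pos rfl]
    by_cases hik : i = k
    · subst hik; simp [mul_inv_cancel₀ (hd i)]
    · simp [hik]
  · intro b _ hb
    rw [if_neg, zero_mul]
    intro hcon
    exact hb (by rw [hcon]; simp)
  · simp

theorem stmt3 {m n r : ℕ} (Om : Set (Set (Fin m × Fin r) × Set (Fin n × Fin r)))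
    (X : Matrix (Fin m) (Fin r) ℂ) (Y : Matrix (Fin n) (Fin r) ℂ)
    (h : (X, Y) ∈ PSUniqueSet (SigmaOm Om)) :
    Colsupp X = Colsupp Y := by
  classical
  obtain ⟨hmem, huniq⟩ := h
  ext j
  simp only [Colsupp, Set.mem_setOf_eq]
  constructor
  · intro hjX
    by_contra hjY
    push_neg at hjY
    set X' : Matrix (Fin m) (Fin r) ℂ :=
      Matrix.of (fun i k => if k = j then 0 else X i k) with hX'
    have hSig : (X', Y) ∈ SigmaOm Om := by
      obtain ⟨S, hS, hX, hY⟩ := hmem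
      refine ⟨S, hS, fun i k hk => hX i k ?_, hY⟩
      intro hzero
      apply hk
      simp only [hX', Matrix.of_apply]
      split
      · rfl
      · exact hzero
    have hprod : X' * Yᵀ = X * Yᵀ := by
      ext a b
      simp only [Matrix.mul_apply, Matrix.transpose_apply]
      refine Finset.sum_congr rfl fun k _ => ?_
      by_cases hkj : k = j
      · subst hkj; simp [hX', hjY b]
      · simp [hX', hkj]
    obtain ⟨G, ⟨σ, d, hd, hG⟩, h1, h2⟩ := huniq (X', Y) hSig hprod
    refine key_lemma X σ (fun k => d (σ k)) (fun k => hd _) j hjX X'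
      (fun i k => rfl) (fun i k => ?_)
    have h1' := congrFun (congrFun h1 i) k
    simp only at h1'
    rw [h1']; change (∑ l, X i l * G l k) = d (σ k) * X i (σ k)
    simp only [hG, mul_ite, mul_zero]
    rw [Finset.sum_ite_eq' Finset.univ (σ k) (fun l => X i l * d l)]
    simp [mul_comm]
  · intro hjY
    by_contra hjX
    push_neg at hjX
    set Y' : Matrix (Fin n) (Fin r) ℂ :=
      Matrix.of (fun i k => if k = j then 0 else Y i k) with hY'
    have hSig : (X, Y') ∈ SigmaOm Om := by
      obtain ⟨S, hS, hX, hY⟩ := hmem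
      refine ⟨S, hS, hX, fun i k hk => hY i k ?_⟩
      intro hzero
      apply hk
      simp only [hY', Matrix.of_apply]
      split
      · rfl
      · exact hzero
    have hprod : X * Y'ᵀ = X * Yᵀ := by
      ext a b
      simp only [Matrix.mul_apply, Matrix.transpose_apply]
      refine Finset.sum_congr rfl fun k _ => ?_
      by_cases hkj : k = j
      · subst hkj; simp [hY', hjX a]
      · simp [hY', hkj]
    obtain ⟨G, ⟨σ, d, hd, hG⟩, h1, h2⟩ := huniq (X, Y') hSig hprod
    have hGinv := genperm_inv G σ d hd hG
    refine key_lemma Y σ (fun k => (d (σ k))⁻¹) (fun k => inv_ne_zero (hd _)) j hjY Y'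
      (fun i k => rfl) (fun i k => ?_)
    have h2' := congrFun (congrFun h2 i) k
    simp only at h2'
    rw [h2', Matrix.mul_apply]
    simp only [hGinv, Matrix.transpose_apply, Matrix.of_apply, mul_ite, mul_zero]
    rw [Finset.sum_ite_eq Finset.univ (σ k) (fun l => Y i l * (d (σ k))⁻¹)]
    simp [mul_comm]
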